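/- Let R be a topological ring and X a semitopological R-module which is not a topological R-module. Then the free semitopological R-module M_R(X) over the topological space X is not a topological R-module. -/

import Mathlib

universe u

theorem free_semitopological_module_not_topological {R X M : Type u}
    [Ring R] [TopologicalSpace R] [IsTopologicalRing R]
    [AddCommGroup X] [TopologicalSpace X] [IsTopologicalAddGroup X] [T2Space X] [Module R X]
    [AddCommGroup M] [TopologicalSpace M] [IsTopologicalAddGroup M] [T2Space M] [Module R M]
    (hsepX₁ : ∀ r : R, Continuous fun x : X => r • x)
    (hsepX₂ : ∀ x : X, Continuous fun r : R => r • x)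
    (hXnot : ¬ Continuous fun p : R × X => p.1 • p.2)
    (hsepM₁ : ∀ r : R, Continuous fun m : M => r • m)
    (hsepM₂ : ∀ m : M, Continuous fun r : R => r • m)
    (i : X → M) (hi : Continuous i)
    (hfree : ∀ (Y : Type u) [TopologicalSpace Y] [AddCommGroup Y] [Module R Y],
      IsTopologicalAddGroup Y → T2Space Y →
      (∀ r : R, Continuous fun y : Y => r • y) →
      (∀ y : Y, Continuous fun r : R => r • y) →
      ∀ f : X → Y, Continuous f →
        ∃! g : M →ₗ[R] Y, Continuous g ∧ ∀ x : X, g (i x) = f x) :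
    ¬ Continuous fun p : R × M => p.1 • p.2 := by
  intro hM
  obtain ⟨h, ⟨hc, hix⟩, -⟩ :=
    hfree X inferInstance inferInstance hsepX₁ hsepX₂ id continuous_id
  apply hXnot
  have : (fun p : R × X => p.1 • p.2) =
      fun p : R × X => h (p.1 • i p.2) := by
    funext p
    rw [map_smul, hix]
    rfl
  rw [this]
  exact hc.comp (hM.comp ((continuous_fst).prodMk (hi.comp continuous_snd)))
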